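/- Let b, c be in K((ℝ≤0)) and x ∈ ℝ. If b is principal, c is nonzero, and every element of supp(c) is strictly greater than x, then either the truncation (b·c)_{≤x} is zero or deg((b·c)_{≤x}) < deg(b) ♯ deg(c). -/

import Mathlib

open Ordinal

/-- Natural addition (Hessenberg sum) of ordinals, as formerly defined in Mathlib's
`Mathlib/SetTheory/Ordinal/NaturalOps.lean` (removed from the current library). -/
noncomputable def Ordinal.nadd (a b : Ordinal.{u}) : Ordinal.{u} :=
  max (blsub.{u, u} a fun a' _ => Ordinal.nadd a' b) (blsub.{u, u} b fun b' _ => Ordinal.nadd a b')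
termination_by (a, b)

infixl:65 " ♯ " => Ordinal.nadd

theorem lt_nadd_iff {a b c : Ordinal} :
    a < b ♯ c ↔ (∃ b' < b, a ≤ b' ♯ c) ∨ ∃ c' < c, a ≤ b ♯ c' := by
  rw [Ordinal.nadd]
  simp [Ordinal.lt_blsub_iff]

theorem nadd_le_iff {a b c : Ordinal} :
    b ♯ c ≤ a ↔ (∀ b' < b, b' ♯ c < a) ∧ ∀ c' < c, b ♯ c' < a := by
  rw [Ordinal.nadd]
  simp [Ordinal.blsub_le_iff]

theorem nadd_lt_nadd_left {b c : Ordinal} (h : b < c) (a : Ordinal) : a ♯ b < a ♯ c :=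
  lt_nadd_iff.2 (Or.inr ⟨b, h, le_rfl⟩)

theorem nadd_lt_nadd_right {b c : Ordinal} (h : b < c) (a : Ordinal) : b ♯ a < c ♯ a :=
  lt_nadd_iff.2 (Or.inl ⟨b, h, le_rfl⟩)

theorem nadd_le_nadd_left {b c : Ordinal} (h : b ≤ c) (a : Ordinal) : a ♯ b ≤ a ♯ c := by
  rcases lt_or_eq_of_le h with (h | rfl)
  · exact (nadd_lt_nadd_left h a).le
  · exact le_rfl

theorem nadd_lt_nadd_of_lt_of_le {a b c d : Ordinal} (h₁ : a < b) (h₂ : c ≤ d) :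
    a ♯ c < b ♯ d :=
  lt_of_lt_of_le (nadd_lt_nadd_right h₁ c) (nadd_le_nadd_left h₂ b)

theorem nadd_le_nadd_right {b c : Ordinal} (h : b ≤ c) (a : Ordinal) : b ♯ a ≤ c ♯ a := by
  rcases lt_or_eq_of_le h with (h | rfl)
  · exact (nadd_lt_nadd_right h a).le
  · exact le_rfl

theorem nadd_lt_nadd_of_le_of_lt {a b c d : Ordinal} (h₁ : a ≤ b) (h₂ : c < d) :
    a ♯ c < b ♯ d :=
  lt_of_le_of_lt (nadd_le_nadd_right h₁ c) (nadd_lt_nadd_left h₂ b)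

theorem nadd_comm (a b : Ordinal) : a ♯ b = b ♯ a := by
  rw [Ordinal.nadd, Ordinal.nadd, max_comm]
  congr <;> ext <;> apply nadd_comm
termination_by (a, b)

@[simp]
theorem nadd_zero (a : Ordinal) : a ♯ 0 = a := by
  induction a using Ordinal.induction with
  | h a IH =>
    rw [Ordinal.nadd, blsub_zero, max_eq_left zero_le]
    convert blsub_id a
    rename_i hb
    exact IH _ hb

@[simp]
theorem zero_nadd (a : Ordinal) : 0 ♯ a = a := by
  rw [nadd_comm, nadd_zero]

/-- The ordinal order type of a well-ordered subset of a linear order. -/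
noncomputable def orderTypeSet {Γ : Type*} [LinearOrder Γ] (s : Set Γ) (hs : s.IsWF) : Ordinal :=
  letI : IsWellFounded s (· < ·) := ⟨hs⟩
  Ordinal.type ((· < ·) : s → s → Prop)

/-- The order type `ot b` of the support of a Hahn series. -/
noncomputable def HahnSeries.ot {Γ : Type*} [LinearOrder Γ] {R : Type*} [Zero R]
    (b : HahnSeries Γ R) : Ordinal :=
  orderTypeSet b.support b.isWF_support

/-- The degree of a Hahn series: the largest ordinal `β` with `ω ^ β ≤ ot b`
(for a nonzero series), implemented as the base-`ω` ordinal logarithm of `ot b`. -/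
noncomputable def HahnSeries.deg {Γ : Type*} [LinearOrder Γ] {R : Type*} [Zero R]
    (b : HahnSeries Γ R) : Ordinal :=
  Ordinal.log Ordinal.omega0 b.ot

/-- A nonzero series is weakly principal if its order type is `ω ^ α` for some ordinal `α`. -/
def weaklyPrincipal {Γ : Type*} [LinearOrder Γ] {R : Type*} [Zero R]
    (b : HahnSeries Γ R) : Prop :=
  ∃ α : Ordinal, b.ot = Ordinal.omega0 ^ α

/-- A series in `K((ℝ≤0))` is principal if it is weakly principal and the
supremum of its support is `0`. -/
def principalSeries {R : Type*} [Zero R] (b : HahnSeries ℝ R) : Prop :=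
  weaklyPrincipal b ∧ sSup b.support = 0

/-- The truncation `b_{≤ x}` of a Hahn series: same coefficients as `b` at
exponents `≤ x`, and coefficient `0` at exponents `> x`. -/
noncomputable def HahnSeries.truncLE {Γ : Type*} [LinearOrder Γ] {R : Type*} [Zero R]
    (b : HahnSeries Γ R) (x : Γ) : HahnSeries Γ R where
  coeff y := if y ≤ x then b.coeff y else 0
  isPWO_support' := b.isPWO_support.mono (fun y hy => by
    simp only [Function.mem_support] at hy
    by_cases h : y ≤ x
    · simpa [h] using hy
    · simp [h] at hy)

open Set Order Pointwise

noncomputable def ots (s : Set ℝ) : Ordinal :=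
  open Classical in
  if h : s.IsWF then orderTypeSet s h else 0

theorem ots_def {s : Set ℝ} (hs : s.IsWF) : ots s = orderTypeSet s hs := dif_pos hs

theorem orderTypeSet_eq_type {s : Set ℝ} (hs : s.IsWF) [IsWellFounded ↥s (· < ·)] :
    orderTypeSet s hs = Ordinal.type ((· < ·) : ↥s → ↥s → Prop) := rfl

theorem ots_empty : ots (∅ : Set ℝ) = 0 := by
  haveI : IsWellFounded ↥(∅ : Set ℝ) (· < ·) := ⟨Set.isWF_empty⟩
  rw [ots_def Set.isWF_empty, orderTypeSet_eq_type]
  exact type_eq_zero_of_empty _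

theorem ots_eq_zero {s : Set ℝ} (hs : s.IsWF) : ots s = 0 ↔ s = ∅ := by
  haveI : IsWellFounded ↥s (· < ·) := ⟨hs⟩
  rw [ots_def hs, orderTypeSet_eq_type, type_eq_zero_iff_isEmpty, Set.isEmpty_coe_sort]

theorem ots_mono {s t : Set ℝ} (ht : t.IsWF) (hst : s ⊆ t) : ots s ≤ ots t := by
  haveI : IsWellFounded ↥t (· < ·) := ⟨ht⟩
  haveI : IsWellFounded ↥s (· < ·) := ⟨ht.mono hst⟩
  rw [ots_def (ht.mono hst), ots_def ht, orderTypeSet_eq_type, orderTypeSet_eq_type]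
  exact RelEmbedding.ordinal_type_le ⟨⟨Set.inclusion hst, Set.inclusion_injective hst⟩, Iff.rfl⟩

theorem ots_inter_Iio {s : Set ℝ} (hs : s.IsWF) {w : ℝ} (hw : w ∈ s) :
    haveI : IsWellFounded ↥s (· < ·) := ⟨hs⟩
    ots (s ∩ Iio w) = Ordinal.typein ((· < ·) : ↥s → ↥s → Prop) ⟨w, hw⟩ := by
  haveI : IsWellFounded ↥s (· < ·) := ⟨hs⟩
  haveI : IsWellFounded ↥(s ∩ Iio w) (· < ·) := ⟨hs.mono inter_subset_left⟩
  rw [ots_def (hs.mono inter_subset_left), orderTypeSet_eq_type, ← type_subrel]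
  exact RelIso.ordinal_type_eq
    { toFun := fun a => ⟨⟨a.1, a.2.1⟩, a.2.2⟩
      invFun := fun b => ⟨b.1.1, ⟨b.1.2, b.2⟩⟩
      left_inv := fun a => rfl
      right_inv := fun b => rfl
      map_rel_iff' := Iff.rfl }

theorem ots_inter_Iio_lt {s : Set ℝ} (hs : s.IsWF) {w : ℝ} (hw : w ∈ s) :
    ots (s ∩ Iio w) < ots s := by
  haveI : IsWellFounded ↥s (· < ·) := ⟨hs⟩
  rw [ots_inter_Iio hs hw, ots_def hs, orderTypeSet_eq_type]
  exact typein_lt_type _ _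

theorem ots_exists_pos {s : Set ℝ} (hs : s.IsWF) {γ : Ordinal} (hγ : γ < ots s) :
    ∃ w ∈ s, ots (s ∩ Iio w) = γ := by
  haveI : IsWellFounded ↥s (· < ·) := ⟨hs⟩
  rw [ots_def hs, orderTypeSet_eq_type] at hγ
  obtain ⟨a, ha⟩ := typein_surj ((· < ·) : ↥s → ↥s → Prop) hγ
  exact ⟨a.1, a.2, by rw [ots_inter_Iio hs a.2, ha]⟩

theorem ots_le_of_forall {s : Set ℝ} (hs : s.IsWF) {γ : Ordinal}
    (H : ∀ w ∈ s, ots (s ∩ Iio w) < γ) : ots s ≤ γ := by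
  by_contra h
  push_neg at h
  obtain ⟨w, hw, hww⟩ := ots_exists_pos hs h
  exact absurd (hww ▸ H w hw) (lt_irrefl _)

theorem ots_add_le_union {s t : Set ℝ} (hs : s.IsWF) (ht : t.IsWF)
    (h : ∀ a ∈ s, ∀ b ∈ t, a < b) : ots s + ots t ≤ ots (s ∪ t) := by
  haveI : IsWellFounded ↥s (· < ·) := ⟨hs⟩
  haveI : IsWellFounded ↥t (· < ·) := ⟨ht⟩
  haveI : IsWellFounded ↥(s ∪ t) (· < ·) := ⟨hs.union ht⟩
  rw [ots_def hs, ots_def ht, ots_def (hs.union ht), orderTypeSet_eq_type,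
    orderTypeSet_eq_type, orderTypeSet_eq_type, ← type_sum_lex]
  refine RelEmbedding.ordinal_type_le ?_
  refine RelEmbedding.ofMonotone
    (Sum.elim (fun a => ⟨a.1, Or.inl a.2⟩) (fun b => ⟨b.1, Or.inr b.2⟩)) ?_
  rintro (a | a) (b | b) hab
  · exact (Sum.lex_inl_inl.mp hab : a < b)
  · exact h a.1 a.2 b.1 b.2
  · exact absurd hab (by simp [Sum.lex_inr_inl])
  · exact (Sum.lex_inr_inr.mp hab : a < b)

theorem ots_union_aux {s t : Set ℝ} (hs : s.IsWF) (ht : t.IsWF) :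
    ∀ (o : Ordinal) (y : ℝ), ots ((s ∪ t) ∩ Iio y) = o →
      ots ((s ∪ t) ∩ Iio y) ≤ ots (s ∩ Iio y) ♯ ots (t ∩ Iio y) := by
  intro o
  induction o using Ordinal.induction with
  | h o IH =>
    intro y ho
    have hu : ((s ∪ t) ∩ Iio y).IsWF := (hs.union ht).mono inter_subset_left
    refine ots_le_of_forall hu ?_
    rintro z ⟨hz, hzy⟩
    have e1 : (s ∪ t) ∩ Iio y ∩ Iio z = (s ∪ t) ∩ Iio z := by
      ext a; constructor
      · rintro ⟨⟨h1, _⟩, h3⟩; exact ⟨h1, h3⟩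
      · rintro ⟨h1, h3⟩
        exact ⟨⟨h1, Set.mem_Iio.mpr (lt_trans (Set.mem_Iio.mp h3) (Set.mem_Iio.mp hzy))⟩, h3⟩
    rw [e1]
    have hlt : ots ((s ∪ t) ∩ Iio z) < o := by
      rw [← ho, ← e1]
      exact ots_inter_Iio_lt hu ⟨hz, hzy⟩
    have hIH := IH _ hlt z rfl
    have e2 : ∀ (u : Set ℝ), u.IsWF → u ∩ Iio y ∩ Iio z = u ∩ Iio z := by
      intro u _; ext a; constructor
      · rintro ⟨⟨h1, _⟩, h3⟩; exact ⟨h1, h3⟩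
      · rintro ⟨h1, h3⟩
        exact ⟨⟨h1, Set.mem_Iio.mpr (lt_trans (Set.mem_Iio.mp h3) (Set.mem_Iio.mp hzy))⟩, h3⟩
    refine lt_of_le_of_lt hIH ?_
    rcases hz with hz | hz
    · have h1 : ots (s ∩ Iio z) < ots (s ∩ Iio y) := by
        rw [← e2 s hs]
        exact ots_inter_Iio_lt (hs.mono inter_subset_left) ⟨hz, hzy⟩
      have h2 : ots (t ∩ Iio z) ≤ ots (t ∩ Iio y) := by
        refine ots_mono (ht.mono inter_subset_left) ?_
        rintro a ⟨h3, h4⟩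
        exact ⟨h3, Set.mem_Iio.mpr (lt_trans (Set.mem_Iio.mp h4) (Set.mem_Iio.mp hzy))⟩
      exact nadd_lt_nadd_of_lt_of_le h1 h2
    · have h1 : ots (t ∩ Iio z) < ots (t ∩ Iio y) := by
        rw [← e2 t ht]
        exact ots_inter_Iio_lt (ht.mono inter_subset_left) ⟨hz, hzy⟩
      have h2 : ots (s ∩ Iio z) ≤ ots (s ∩ Iio y) := by
        refine ots_mono (hs.mono inter_subset_left) ?_
        rintro a ⟨h3, h4⟩
        exact ⟨h3, Set.mem_Iio.mpr (lt_trans (Set.mem_Iio.mp h4) (Set.mem_Iio.mp hzy))⟩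
      exact nadd_lt_nadd_of_le_of_lt h2 h1

theorem ots_union_le {s t : Set ℝ} (hs : s.IsWF) (ht : t.IsWF) :
    ots (s ∪ t) ≤ ots s ♯ ots t := by
  refine ots_le_of_forall (hs.union ht) ?_
  rintro y hy
  refine lt_of_le_of_lt (ots_union_aux hs ht _ y rfl) ?_
  rcases hy with hy | hy
  · exact nadd_lt_nadd_of_lt_of_le (ots_inter_Iio_lt hs hy)
      (ots_mono ht inter_subset_left)
  · exact nadd_lt_nadd_of_le_of_lt (ots_mono hs inter_subset_left)
      (ots_inter_Iio_lt ht hy)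

theorem NS {r : Ordinal} (hr : ∀ x y : Ordinal, x < ω ^ r → y < ω ^ r → x ♯ y < ω ^ r) :
    ∀ (N j i : ℕ), j + i ≤ N → ∀ x z : Ordinal, x < ω ^ r → z < ω ^ r →
      (ω ^ r * j + x) ♯ (ω ^ r * i + z) ≤ ω ^ r * (j + i : ℕ) + (x ♯ z) := by
  have hW0 : (ω ^ r : Ordinal) ≠ 0 := (opow_pos r omega0_pos).ne'
  intro N
  induction N with
  | zero =>
    intro j i hji x z hx hz
    obtain ⟨rfl, rfl⟩ : j = 0 ∧ i = 0 := by omega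
    simpa using le_refl (x ♯ z)
  | succ N IHN =>
    intro j i hji
    suffices h : ∀ o : Ordinal, ∀ x z : Ordinal, x ♯ z = o → x < ω ^ r → z < ω ^ r →
        (ω ^ r * j + x) ♯ (ω ^ r * i + z) ≤ ω ^ r * (j + i : ℕ) + (x ♯ z) by
      intro x z hx hz; exact h (x ♯ z) x z rfl hx hz
    intro o
    induction o using Ordinal.induction with
    | h o IHo =>
      intro x z ho hx hz
      rw [nadd_le_iff]
      constructor
      · intro w hw
        rcases lt_or_ge w (ω ^ r * j) with h1 | h1
        · -- w < ω^r * j, decompose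
          obtain ⟨j₂, hj₂⟩ := lt_omega0.1 (lt_of_lt_of_le ((div_lt hW0).2 h1)
            (le_of_lt (nat_lt_omega0 j)))
          have hj2j : j₂ < j := by
            have := (div_lt hW0).2 h1
            rw [hj₂] at this
            exact_mod_cast this
          have hwd : ω ^ r * j₂ + w % (ω ^ r) = w := by
            rw [← hj₂]; exact div_add_mod w (ω ^ r)
          have hkey := IHN j₂ i (by omega) (w % (ω ^ r)) z (mod_lt w hW0) hz
          calc w ♯ (ω ^ r * i + z) = (ω ^ r * j₂ + w % (ω ^ r)) ♯ (ω ^ r * i + z) := by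
                rw [hwd]
            _ ≤ ω ^ r * (j₂ + i : ℕ) + (w % (ω ^ r) ♯ z) := hkey
            _ < ω ^ r * (j₂ + i : ℕ) + ω ^ r := by
                exact add_lt_add_right (hr _ _ (mod_lt w hW0) hz) _
            _ = ω ^ r * (j₂ + i + 1 : ℕ) := by
                simp [Nat.cast_add, mul_add, add_assoc, Ordinal.mul_succ]
            _ ≤ ω ^ r * (j + i : ℕ) := by
                refine mul_le_mul_right ?_ _
                exact Nat.cast_le.2 (by omega)
            _ ≤ ω ^ r * (j + i : ℕ) + (x ♯ z) := le_add_right le_rfl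
        · -- ω^r * j ≤ w
          set y := w - ω ^ r * j with hy
          have hwy : w = ω ^ r * j + y := (Ordinal.add_sub_cancel_of_le h1).symm
          have hyx : y < x := by
            have : ω ^ r * j + y < ω ^ r * j + x := by rw [← hwy]; exact hw
            exact (add_lt_add_iff_left _).1 this
          have hyz : y ♯ z < x ♯ z := nadd_lt_nadd_right hyx z
          calc w ♯ (ω ^ r * i + z) = (ω ^ r * j + y) ♯ (ω ^ r * i + z) := by rw [← hwy]
            _ ≤ ω ^ r * (j + i : ℕ) + (y ♯ z) :=
                IHo (y ♯ z) (ho ▸ hyz) y z rfl (lt_trans hyx hx) hz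
            _ < ω ^ r * (j + i : ℕ) + (x ♯ z) := add_lt_add_right hyz _
      · intro w hw
        rcases lt_or_ge w (ω ^ r * i) with h1 | h1
        · obtain ⟨i₂, hi₂⟩ := lt_omega0.1 (lt_of_lt_of_le ((div_lt hW0).2 h1)
            (le_of_lt (nat_lt_omega0 i)))
          have hi2i : i₂ < i := by
            have := (div_lt hW0).2 h1
            rw [hi₂] at this
            exact_mod_cast this
          have hwd : ω ^ r * i₂ + w % (ω ^ r) = w := by
            rw [← hi₂]; exact div_add_mod w (ω ^ r)
          have hkey := IHN j i₂ (by omega) x (w % (ω ^ r)) hx (mod_lt w hW0)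
          calc (ω ^ r * j + x) ♯ w = (ω ^ r * j + x) ♯ (ω ^ r * i₂ + w % (ω ^ r)) := by
                rw [hwd]
            _ ≤ ω ^ r * (j + i₂ : ℕ) + (x ♯ w % (ω ^ r)) := hkey
            _ < ω ^ r * (j + i₂ : ℕ) + ω ^ r := by
                exact add_lt_add_right (hr _ _ hx (mod_lt w hW0)) _
            _ = ω ^ r * (j + i₂ + 1 : ℕ) := by
                simp [Nat.cast_add, mul_add, add_assoc, Ordinal.mul_succ]
            _ ≤ ω ^ r * (j + i : ℕ) := by
                refine mul_le_mul_right ?_ _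
                exact Nat.cast_le.2 (by omega)
            _ ≤ ω ^ r * (j + i : ℕ) + (x ♯ z) := le_add_right le_rfl
        · set y := w - ω ^ r * i with hy
          have hwy : w = ω ^ r * i + y := (Ordinal.add_sub_cancel_of_le h1).symm
          have hyz : y < z := by
            have : ω ^ r * i + y < ω ^ r * i + z := by rw [← hwy]; exact hw
            exact (add_lt_add_iff_left _).1 this
          have hxy : x ♯ y < x ♯ z := nadd_lt_nadd_left hyz x
          calc (ω ^ r * j + x) ♯ w = (ω ^ r * j + x) ♯ (ω ^ r * i + y) := by rw [← hwy]
            _ ≤ ω ^ r * (j + i : ℕ) + (x ♯ y) :=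
                IHo (x ♯ y) (ho ▸ hxy) x y rfl hx (lt_trans hyz hz)
            _ < ω ^ r * (j + i : ℕ) + (x ♯ z) := add_lt_add_right hxy _

theorem NC : ∀ t : Ordinal, ∀ u v : Ordinal, u < ω ^ t → v < ω ^ t → u ♯ v < ω ^ t := by
  intro t
  induction t using Ordinal.induction with
  | h t IH =>
    intro u v hu hv
    rcases eq_or_ne u 0 with rfl | hu0
    · simpa using hv
    rcases eq_or_ne v 0 with rfl | hv0
    · simpa using hu
    rcases Ordinal.zero_or_succ_or_isSuccLimit t with rfl | ⟨r, rfl⟩ | hl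
    · exfalso
      rw [opow_zero] at hu
      exact hu0 (lt_one_iff_zero.1 hu)
    · -- successor case
      have hW0 : (ω ^ r : Ordinal) ≠ 0 := (opow_pos r omega0_pos).ne'
      have hWω : (ω : Ordinal) ^ succ r = ω ^ r * ω := opow_succ ω r
      have hdu : u / ω ^ r < ω := (div_lt hW0).2 (by rwa [← hWω])
      have hdv : v / ω ^ r < ω := (div_lt hW0).2 (by rwa [← hWω])
      obtain ⟨j, hj⟩ := lt_omega0.1 hdu
      obtain ⟨i, hi⟩ := lt_omega0.1 hdv
      have hud : ω ^ r * j + u % (ω ^ r) = u := by rw [← hj]; exact div_add_mod u (ω ^ r)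
      have hvd : ω ^ r * i + v % (ω ^ r) = v := by rw [← hi]; exact div_add_mod v (ω ^ r)
      have hr : ∀ x y : Ordinal, x < ω ^ r → y < ω ^ r → x ♯ y < ω ^ r :=
        IH r (lt_succ r)
      have := NS hr (j + i) j i le_rfl (u % (ω ^ r)) (v % (ω ^ r))
        (mod_lt u hW0) (mod_lt v hW0)
      rw [hud, hvd] at this
      refine lt_of_le_of_lt this ?_
      calc ω ^ r * (j + i : ℕ) + (u % (ω ^ r) ♯ v % (ω ^ r))
          < ω ^ r * (j + i : ℕ) + ω ^ r :=
            add_lt_add_right (hr _ _ (mod_lt u hW0) (mod_lt v hW0)) _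
        _ = ω ^ r * (j + i + 1 : ℕ) := by
            simp [Nat.cast_add, mul_add, add_assoc, Ordinal.mul_succ]
        _ < ω ^ r * ω := by
            refine (mul_lt_mul_iff_right₀ (opow_pos r omega0_pos)).2 ?_
            exact nat_lt_omega0 _
        _ = ω ^ succ r := hWω.symm
    · -- limit case
      have h1 : log ω u < t := (lt_opow_iff_log_lt one_lt_omega0 hu0).1 hu
      have h2 : log ω v < t := (lt_opow_iff_log_lt one_lt_omega0 hv0).1 hv
      set a := max (log ω u) (log ω v) with ha
      have hat : succ a < t := hl.succ_lt (max_lt h1 h2)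
      have hua : u < ω ^ succ a :=
        lt_of_lt_of_le (lt_opow_succ_log_self one_lt_omega0 u)
          (opow_le_opow_right omega0_pos (succ_le_succ (le_max_left _ _)))
      have hva : v < ω ^ succ a :=
        lt_of_lt_of_le (lt_opow_succ_log_self one_lt_omega0 v)
          (opow_le_opow_right omega0_pos (succ_le_succ (le_max_right _ _)))
      exact lt_of_lt_of_le (IH (succ a) hat u v hua hva)
        (opow_le_opow_right omega0_pos hat.le)

theorem wf_add {s t : Set ℝ} (hs : s.IsWF) (ht : t.IsWF) : (s + t).IsWF :=
  Set.isPWO_iff_isWF.mp ((Set.isPWO_iff_isWF.mpr hs).add (Set.isPWO_iff_isWF.mpr ht))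

theorem Fkey (T : Set ℝ) (hT : T.IsWF) (e t₀ : Ordinal)
    (H : ∀ A : Set ℝ, A.IsWF → ots A ≤ ω ^ e → ots (A + T) < ω ^ t₀) :
    ∀ (n : ℕ) (S : Set ℝ), S.IsWF → ots S ≤ ω ^ e * n → ots (S + T) < ω ^ t₀ := by
  intro n
  induction n with
  | zero =>
    intro S hS h0
    have : S = ∅ := (ots_eq_zero hS).1 (le_antisymm (by simpa using h0) zero_le)
    rw [this, Set.empty_add, ots_empty]
    exact opow_pos t₀ omega0_pos
  | succ n IH =>
    intro S hS hle
    rcases le_or_gt (ots S) (ω ^ e * n) with h | h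
    · exact IH S hS h
    obtain ⟨w, hw, hwot⟩ := ots_exists_pos hS h
    set A := S ∩ Iio w with hA
    set B := S ∩ Ici w with hB
    have hSAB : S = A ∪ B := by
      ext a
      constructor
      · intro ha
        rcases lt_or_ge a w with h' | h'
        · exact Or.inl ⟨ha, h'⟩
        · exact Or.inr ⟨ha, h'⟩
      · rintro (⟨ha, _⟩ | ⟨ha, _⟩) <;> exact ha
    have hAwf : A.IsWF := hS.mono inter_subset_left
    have hBwf : B.IsWF := hS.mono inter_subset_left
    have hBle : ots B ≤ ω ^ e := by
      have h1 : ots A + ots B ≤ ots S := by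
        rw [hSAB]
        refine ots_add_le_union hAwf hBwf ?_
        rintro a ⟨_, ha⟩ b ⟨_, hb⟩
        exact lt_of_lt_of_le ha hb
      rw [hwot] at h1
      have h2 : ω ^ e * n + ots B ≤ ω ^ e * n + ω ^ e := by
        refine le_trans h1 (le_trans hle ?_)
        rw [Nat.cast_add, Nat.cast_one, mul_add, mul_one]
      exact (add_le_add_iff_left _).1 h2
    have hstep : ots (S + T) ≤ ots (A + T) ♯ ots (B + T) := by
      rw [hSAB, Set.union_add]
      exact ots_union_le (wf_add hAwf hT) (wf_add hBwf hT)
    refine lt_of_le_of_lt hstep ?_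
    exact NC t₀ _ _ (IH A hAwf (le_of_eq hwot)) (H B hBwf hBle)

theorem Cmain : ∀ (c a b : Ordinal), a ♯ b = c →
    ∀ (S T : Set ℝ), S.IsWF → T.IsWF → ots S ≤ ω ^ a → ots T ≤ ω ^ b →
      ots (S + T) ≤ ω ^ (a ♯ b) := by
  intro c
  induction c using Ordinal.induction with
  | h c IHc =>
    intro a b hab S T hS hT hSa hTb
    -- the one-sided strict sub-claim
    have SC : ∀ (a' b' : Ordinal), a' ♯ b' = c → ∀ (S' T' : Set ℝ), S'.IsWF → T'.IsWF →
        ots S' < ω ^ a' → ots T' ≤ ω ^ b' → ots (S' + T') < ω ^ (a' ♯ b') := by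
      intro a' b' hab' S' T' hS' hT' hSa' hTb'
      rcases eq_or_ne (ots S') 0 with h0 | h0
      · rw [(ots_eq_zero hS').1 h0, Set.empty_add, ots_empty]
        exact opow_pos _ omega0_pos
      set e := log ω (ots S') with he
      have hea : e < a' := (lt_opow_iff_log_lt one_lt_omega0 h0).1 hSa'
      have hW0 : (ω ^ e : Ordinal) ≠ 0 := (opow_pos e omega0_pos).ne'
      have hdiv : ots S' / ω ^ e < ω := by
        refine (div_lt hW0).2 ?_
        rw [← opow_succ]
        exact lt_opow_succ_log_self one_lt_omega0 _
      obtain ⟨k, hk⟩ := lt_omega0.1 hdiv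
      have hSk : ots S' ≤ ω ^ e * (k + 1 : ℕ) := by
        have := lt_mul_succ_div (ots S') hW0
        rw [hk] at this
        refine le_of_lt (lt_of_lt_of_le this ?_)
        rw [Nat.cast_add, Nat.cast_one, add_one_eq_succ]
      refine Fkey T' hT' e (a' ♯ b') ?_ (k + 1) S' hS' hSk
      intro A hA hAe
      have := IHc (e ♯ b') (hab' ▸ nadd_lt_nadd_right hea b') e b' rfl A T' hA hT' hAe hTb'
      refine lt_of_le_of_lt this ?_
      exact (opow_lt_opow_iff_right one_lt_omega0).2 (nadd_lt_nadd_right hea b')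
    have hadd : (S + T).IsWF := wf_add hS hT
    refine ots_le_of_forall hadd ?_
    intro y hy
    obtain ⟨s, hsS, t, htT, rfl⟩ := Set.mem_add.1 hy
    have hsub : (S + T) ∩ Iio (s + t) ⊆ ((S ∩ Iio s) + T) ∪ (S + (T ∩ Iio t)) := by
      rintro z ⟨hz1, hz2⟩
      obtain ⟨s', hs', t', ht', rfl⟩ := Set.mem_add.1 hz1
      rcases lt_or_ge s' s with h' | h'
      · exact Or.inl (Set.mem_add.2 ⟨s', ⟨hs', h'⟩, t', ht', rfl⟩)
      · have ht'' : t' < t := by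
          by_contra hc
          push_neg at hc
          exact absurd (add_le_add h' hc) (not_le.mpr (Set.mem_Iio.mp hz2))
        exact Or.inr (Set.mem_add.2 ⟨s', hs', t', ⟨ht', ht''⟩, rfl⟩)
    have hwf1 : ((S ∩ Iio s) + T).IsWF := wf_add (hS.mono inter_subset_left) hT
    have hwf2 : (S + (T ∩ Iio t)).IsWF := wf_add hS (hT.mono inter_subset_left)
    have hleft : ots ((S ∩ Iio s) + T) < ω ^ (a ♯ b) :=
      SC a b hab (S ∩ Iio s) T (hS.mono inter_subset_left) hT
        (lt_of_lt_of_le (ots_inter_Iio_lt hS hsS) hSa) hTb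
    have hright : ots (S + (T ∩ Iio t)) < ω ^ (a ♯ b) := by
      rw [add_comm S (T ∩ Iio t), show a ♯ b = b ♯ a from nadd_comm a b]
      exact SC b a (by rw [nadd_comm]; exact hab) (T ∩ Iio t) S
        (hT.mono inter_subset_left) hS
        (lt_of_lt_of_le (ots_inter_Iio_lt hT htT) hTb) hSa
    calc ots ((S + T) ∩ Iio (s + t))
        ≤ ots (((S ∩ Iio s) + T) ∪ (S + (T ∩ Iio t))) :=
          ots_mono (hwf1.union hwf2) hsub
      _ ≤ ots ((S ∩ Iio s) + T) ♯ ots (S + (T ∩ Iio t)) := ots_union_le hwf1 hwf2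
      _ < ω ^ (a ♯ b) := NC _ _ _ hleft hright

theorem SCfinal {a b : Ordinal} (S T : Set ℝ) (hS : S.IsWF) (hT : T.IsWF)
    (hSa : ots S < ω ^ a) (hTb : ots T ≤ ω ^ b) : ots (S + T) < ω ^ (a ♯ b) := by
  rcases eq_or_ne (ots S) 0 with h0 | h0
  · rw [(ots_eq_zero hS).1 h0, Set.empty_add, ots_empty]
    exact opow_pos _ omega0_pos
  set e := log ω (ots S) with he
  have hea : e < a := (lt_opow_iff_log_lt one_lt_omega0 h0).1 hSa
  have hW0 : (ω ^ e : Ordinal) ≠ 0 := (opow_pos e omega0_pos).ne'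
  have hdiv : ots S / ω ^ e < ω := by
    refine (div_lt hW0).2 ?_
    rw [← opow_succ]
    exact lt_opow_succ_log_self one_lt_omega0 _
  obtain ⟨k, hk⟩ := lt_omega0.1 hdiv
  have hSk : ots S ≤ ω ^ e * (k + 1 : ℕ) := by
    have := lt_mul_succ_div (ots S) hW0
    rw [hk] at this
    refine le_of_lt (lt_of_lt_of_le this ?_)
    rw [Nat.cast_add, Nat.cast_one, add_one_eq_succ]
  refine Fkey T hT e (a ♯ b) ?_ (k + 1) S hS hSk
  intro A hA hAe
  have := Cmain (e ♯ b) e b rfl A T hA hT hAe hTb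
  refine lt_of_le_of_lt this ?_
  exact (opow_lt_opow_iff_right one_lt_omega0).2 (nadd_lt_nadd_right hea b)

theorem Efinal {a b : Ordinal} {m : ℕ} (S T : Set ℝ) (hS : S.IsWF) (hT : T.IsWF)
    (hSa : ots S < ω ^ a) (hTb : ots T ≤ ω ^ b * m) : ots (S + T) < ω ^ (a ♯ b) := by
  rw [add_comm S T]
  refine Fkey S hS b (a ♯ b) ?_ m T hT hTb
  intro B hB hBle
  rw [add_comm B S]
  exact SCfinal S B hS hB hSa hBle

/-- Let `b, c ∈ K((ℝ≤0))` and `x ∈ ℝ`. If `b` is principal, `c ≠ 0` and every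
element of `supp c` is `> x`, then `(b * c)_{≤ x}` is zero or
`deg ((b * c)_{≤ x}) < deg b ♯ deg c`. -/
theorem deg_truncLE_mul_lt {K : Type*} [Field K] (b c : HahnSeries ℝ K) (x : ℝ)
    (hb : ∀ y ∈ b.support, y ≤ 0) (hc : ∀ y ∈ c.support, y ≤ 0)
    (hbp : principalSeries b) (hc0 : c ≠ 0) (hcx : ∀ y ∈ c.support, x < y) :
    (b * c).truncLE x = 0 ∨ ((b * c).truncLE x).deg < b.deg ♯ c.deg := by
  by_cases hd0 : (b * c).truncLE x = 0
  · exact Or.inl hd0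
  right
  set d := (b * c).truncLE x with hdd
  obtain ⟨α, hα⟩ := hbp.1
  have hb0 : b ≠ 0 := by
    intro h
    rw [h] at hα
    have : (0 : HahnSeries ℝ K).ot = 0 := by
      rw [show (0 : HahnSeries ℝ K).ot = ots (0 : HahnSeries ℝ K).support from
        (ots_def (0 : HahnSeries ℝ K).isWF_support).symm]
      exact (ots_eq_zero (0 : HahnSeries ℝ K).isWF_support).2 HahnSeries.support_zero
    rw [this] at hα
    exact (opow_ne_zero α omega0_ne_zero).symm hα
  have hbne : b.support.Nonempty := HahnSeries.support_nonempty_iff.2 hb0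
  have hcne : c.support.Nonempty := HahnSeries.support_nonempty_iff.2 hc0
  set v₀ := c.isWF_support.min hcne with hv₀def
  have hv₀ : v₀ ∈ c.support := Set.IsWF.min_mem _ _
  have hxv : x < v₀ := hcx _ hv₀
  set z := x - v₀ with hz
  set S := b.support ∩ Set.Iic z with hSdef
  set T := c.support with hTdef
  have hSwf : S.IsWF := b.isWF_support.mono inter_subset_left
  have hTwf : T.IsWF := c.isWF_support
  -- support of d sits in S + T
  have hsub : d.support ⊆ S + T := by
    intro y hy
    rw [HahnSeries.mem_support] at hy
    have hyx : y ≤ x := by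
      by_contra h
      exact hy (by simp [hdd, HahnSeries.truncLE, h])
    have hybc : (b * c).coeff y ≠ 0 := by
      intro h
      exact hy (by simp [hdd, HahnSeries.truncLE, hyx, h])
    have hymem : y ∈ (b * c).support := (HahnSeries.mem_support _ _).2 hybc
    obtain ⟨u, hu, v, hv, huv⟩ := Set.mem_add.1
      (HahnSeries.support_mul_subset hymem)
    refine Set.mem_add.2 ⟨u, ⟨hu, ?_⟩, v, hv, huv⟩
    have h1 : v₀ ≤ v := Set.IsWF.min_le _ _ hv
    simp only [Set.mem_Iic, hz]
    linarith [huv]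
  -- ots bounds
  have hotb : ots b.support = ω ^ α := by rw [ots_def b.isWF_support]; exact hα
  have hSlt : ots S < ω ^ α := by
    have hz0 : z < 0 := by rw [hz]; linarith
    have : z < sSup b.support := by rw [hbp.2]; exact hz0
    obtain ⟨w, hw, hzw⟩ := exists_lt_of_lt_csSup hbne this
    have hsub2 : S ⊆ b.support ∩ Set.Iio w := by
      rintro u ⟨h1, h2⟩
      exact ⟨h1, lt_of_le_of_lt h2 hzw⟩
    calc ots S ≤ ots (b.support ∩ Set.Iio w) :=
          ots_mono (b.isWF_support.mono inter_subset_left) hsub2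
      _ < ots b.support := ots_inter_Iio_lt b.isWF_support hw
      _ = ω ^ α := hotb
  have hotc0 : ots T ≠ 0 := fun h => hcne.ne_empty ((ots_eq_zero hTwf).1 h)
  set δ := log ω (ots T) with hδ
  have hW0 : (ω ^ δ : Ordinal) ≠ 0 := (opow_pos δ omega0_pos).ne'
  have hdiv : ots T / ω ^ δ < ω := by
    refine (Ordinal.div_lt hW0).2 ?_
    rw [← opow_succ]
    exact lt_opow_succ_log_self one_lt_omega0 _
  obtain ⟨k, hk⟩ := lt_omega0.1 hdiv
  have hTk : ots T ≤ ω ^ δ * (k + 1 : ℕ) := by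
    have := lt_mul_succ_div (ots T) hW0
    rw [hk] at this
    refine le_of_lt (lt_of_lt_of_le this ?_)
    rw [Nat.cast_add, Nat.cast_one, Ordinal.add_one_eq_succ]
  have hmain : ots (S + T) < ω ^ (α ♯ δ) := Efinal S T hSwf hTwf hSlt hTk
  have hdlt : d.ot < ω ^ (α ♯ δ) := by
    have h1 : d.ot = ots d.support := (ots_def d.isWF_support).symm
    rw [h1]
    exact lt_of_le_of_lt (ots_mono (wf_add hSwf hTwf) hsub) hmain
  have hdot0 : d.ot ≠ 0 := by
    intro h
    have h1 : d.ot = ots d.support := (ots_def d.isWF_support).symm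
    rw [h1] at h
    exact (HahnSeries.support_nonempty_iff.2 hd0).ne_empty ((ots_eq_zero d.isWF_support).1 h)
  have hdeg : d.deg < α ♯ δ := (lt_opow_iff_log_lt one_lt_omega0 hdot0).1 hdlt
  have hbdeg : b.deg = α := by rw [HahnSeries.deg, hα]; exact log_opow one_lt_omega0 α
  have hcdeg : c.deg = δ := by
    rw [HahnSeries.deg, hδ, show c.ot = ots T from (ots_def c.isWF_support).symm]
  rw [hbdeg, hcdeg]
  exact hdeg
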